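/- arXiv:1810.11110 — 3 statements merged into one kernel-verified Lean document; each statement's English description precedes it below -/
import Mathlib

section
/- Let δ ≥ 0, and let a₁ < b₁ and a₂ < b₂ be real numbers with centers cᵢ = (aᵢ+bᵢ)/2 satisfying c₂ > c₁. Then for every κ with 0 < κ ≤ c₂ - c₁, the double integral ∫_{a₁}^{b₁} ∫_{a₂}^{b₂} [ log(|x-y|² + δ²) − log(|x-y-κ|² + δ²) ] dx dy is strictly positive. Moreover this quantity is at least as large when δ = 0 as for any δ ≥ 0. -/
open intervalIntegral

namespace LogShiftAux

open Real MeasureTheory Set Filter Topology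


lemma intervalIntegrable_log01 {b : ℝ} (hb0 : 0 ≤ b) (hb1 : b ≤ 1) :
    IntervalIntegrable Real.log volume 0 b := by
  have hmin : min (0:ℝ) b = 0 := min_eq_left hb0
  have hmax : max (0:ℝ) b = b := max_eq_right hb0
  have h := intervalIntegrable_deriv_of_nonneg (g := fun x => x - x * Real.log x)
      (g' := fun x => -Real.log x) (a := (0:ℝ)) (b := b)
      (by exact (continuous_id.sub Real.continuous_mul_log).continuousOn)
      (fun x hx => ?_) (fun x hx => ?_)
  · have h2 := h.neg
    have : (-fun x => -Real.log x) = Real.log := by funext x; simp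
    rwa [this] at h2
  · rw [hmin, hmax] at hx
    have hx0 : x ≠ 0 := ne_of_gt hx.1
    have h2 := (hasDerivAt_id x).sub (Real.hasDerivAt_mul_log hx0)
    exact h2.congr_deriv (by ring)
  · rw [hmin, hmax] at hx
    simp only [neg_nonneg]
    exact Real.log_nonpos hx.1.le (hx.2.le.trans hb1)

lemma intervalIntegrable_log_all (a b : ℝ) : IntervalIntegrable Real.log volume a b := by
  have key : ∀ c : ℝ, 0 ≤ c → IntervalIntegrable Real.log volume 0 c := by
    intro c hc
    rcases le_total c 1 with h|h
    · exact intervalIntegrable_log01 hc h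
    · exact (intervalIntegrable_log01 zero_le_one le_rfl).trans
        (intervalIntegrable_log (by rw [Set.uIcc_of_le h]; rintro ⟨h1,h2⟩; linarith))
  have key2 : ∀ c : ℝ, IntervalIntegrable Real.log volume 0 c := by
    intro c
    rcases le_total 0 c with h|h
    · exact key c h
    · have h2 := (IntervalIntegrable.iff_comp_neg (f := Real.log)).mp (key (-c) (by linarith))
      have h3 : (fun x : ℝ => Real.log (-x)) = Real.log := by
        funext x; exact Real.log_neg_eq_log x
      rw [h3] at h2
      simpa using h2
  exact (key2 a).symm.trans (key2 b)


noncomputable def Phi (δ t : ℝ) : ℝ :=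
  t * Real.log (t ^ 2 + δ ^ 2) - 2 * t + 2 * δ * Real.arctan (t / δ)

lemma Phi_neg (δ t : ℝ) : Phi δ (-t) = - Phi δ t := by
  unfold Phi
  rw [show (-t) ^ 2 = t ^ 2 by ring, neg_div, Real.arctan_neg]
  ring

lemma continuous_Phi {δ : ℝ} (hδ : 0 < δ) : Continuous (Phi δ) := by
  unfold Phi
  have h1 : Continuous fun t : ℝ => t ^ 2 + δ ^ 2 := by continuity
  have h2 : Continuous fun t : ℝ => Real.log (t ^ 2 + δ ^ 2) :=
    Continuous.log h1 (fun t => by positivity)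
  continuity

lemma hasDerivAt_Phi {δ : ℝ} (hδ : 0 < δ) (t : ℝ) :
    HasDerivAt (Phi δ) (Real.log (t ^ 2 + δ ^ 2)) t := by
  have hpos : (0:ℝ) < t ^ 2 + δ ^ 2 := by positivity
  have h1 : HasDerivAt (fun t : ℝ => t ^ 2 + δ ^ 2) (2 * t) t := by
    simpa using (hasDerivAt_pow 2 t).add_const (δ ^ 2)
  have hlog : HasDerivAt (fun t : ℝ => Real.log (t ^ 2 + δ ^ 2))
      (2 * t / (t ^ 2 + δ ^ 2)) t := h1.log (ne_of_gt hpos)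
  have hmul : HasDerivAt (fun t : ℝ => t * Real.log (t ^ 2 + δ ^ 2))
      (1 * Real.log (t ^ 2 + δ ^ 2) + t * (2 * t / (t ^ 2 + δ ^ 2))) t :=
    (hasDerivAt_id t).mul hlog
  have hdiv : HasDerivAt (fun t : ℝ => t / δ) (1 / δ) t := (hasDerivAt_id t).div_const δ
  have harc : HasDerivAt (fun t : ℝ => Real.arctan (t / δ))
      ((1 / (1 + (t / δ) ^ 2)) * (1 / δ)) t :=
    hdiv.arctan
  have htot := (hmul.sub ((hasDerivAt_id t).const_mul 2)).add (harc.const_mul (2 * δ))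
  refine htot.congr_deriv ?_
  have hδ' : (δ:ℝ) ≠ 0 := ne_of_gt hδ
  have h2 : (0:ℝ) < 1 + (t / δ) ^ 2 := by positivity
  field_simp
  ring

noncomputable def Gf (δ a b y : ℝ) : ℝ := Phi δ (b - y) - Phi δ (a - y)

lemma continuous_Gf {δ : ℝ} (hδ : 0 < δ) (a b : ℝ) : Continuous (Gf δ a b) :=
  ((continuous_Phi hδ).comp (continuous_const.sub continuous_id)).sub
    ((continuous_Phi hδ).comp (continuous_const.sub continuous_id))

lemma Gf_sym (δ a b y : ℝ) : Gf δ a b (a + b - y) = Gf δ a b y := by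
  unfold Gf
  rw [show b - (a + b - y) = -(a - y) by ring, show a - (a + b - y) = -(b - y) by ring,
    Phi_neg, Phi_neg]
  ring

lemma integral_logsq {δ : ℝ} (hδ : 0 < δ) (y A B : ℝ) :
    (∫ x in A..B, Real.log ((x - y) ^ 2 + δ ^ 2)) = Phi δ (B - y) - Phi δ (A - y) := by
  have h1 : (∫ x in A..B, Real.log ((x - y) ^ 2 + δ ^ 2))
      = ∫ t in A - y..B - y, Real.log (t ^ 2 + δ ^ 2) :=
    integral_comp_sub_right (fun t => Real.log (t ^ 2 + δ ^ 2)) y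
  rw [h1]
  refine integral_eq_sub_of_hasDerivAt (fun t _ => hasDerivAt_Phi hδ t) ?_
  exact (Continuous.log (by continuity) (fun t => by positivity)).intervalIntegrable _ _

lemma hasDerivAt_Gf {δ : ℝ} (hδ : 0 < δ) (a b y : ℝ) :
    HasDerivAt (Gf δ a b)
      (Real.log ((a - y) ^ 2 + δ ^ 2) - Real.log ((b - y) ^ 2 + δ ^ 2)) y := by
  have hb : HasDerivAt (fun y : ℝ => b - y) (-1) y := by
    simpa using (hasDerivAt_id y).const_sub b
  have ha : HasDerivAt (fun y : ℝ => a - y) (-1) y := by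
    simpa using (hasDerivAt_id y).const_sub a
  have h1 := (hasDerivAt_Phi hδ (b - y)).comp y hb
  have h2 := (hasDerivAt_Phi hδ (a - y)).comp y ha
  have := h1.sub h2
  exact this.congr_deriv (by ring)

lemma pair_le {a b : ℝ} {f : ℝ → ℝ} (hsym : ∀ y, f (a + b - y) = f y)
    (hanti : AntitoneOn f (Iic ((a + b) / 2))) {y₁ y₂ : ℝ} (h12 : y₁ ≤ y₂)
    (hsum : y₁ + y₂ ≤ a + b) : f y₂ ≤ f y₁ := by
  rcases le_total y₂ ((a + b) / 2) with h | h
  · exact hanti (mem_Iic.2 (by linarith)) (mem_Iic.2 h) h12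
  · rw [← hsym y₂]
    exact hanti (mem_Iic.2 (by linarith)) (mem_Iic.2 (by linarith)) (by linarith)

lemma pair_lt {a b : ℝ} {f : ℝ → ℝ} (hsym : ∀ y, f (a + b - y) = f y)
    (hanti : StrictAntiOn f (Iic ((a + b) / 2))) {y₁ y₂ : ℝ} (h12 : y₁ < y₂)
    (hsum : y₁ + y₂ < a + b) : f y₂ < f y₁ := by
  rcases le_total y₂ ((a + b) / 2) with h | h
  · exact hanti (mem_Iic.2 (by linarith)) (mem_Iic.2 h) h12
  · rw [← hsym y₂]
    exact hanti (mem_Iic.2 (by linarith)) (mem_Iic.2 (by linarith)) (by linarith)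

lemma strictAntiOn_Gf {δ : ℝ} (hδ : 0 < δ) {a b : ℝ} (hab : a < b) :
    StrictAntiOn (Gf δ a b) (Iic ((a + b) / 2)) := by
  apply strictAntiOn_of_deriv_neg (convex_Iic _) (continuous_Gf hδ a b).continuousOn
  intro y hy
  rw [interior_Iic, mem_Iio] at hy
  rw [(hasDerivAt_Gf hδ a b y).deriv]
  have h1 : (a - y) ^ 2 + δ ^ 2 < (b - y) ^ 2 + δ ^ 2 := by nlinarith
  have h2 : (0:ℝ) < (a - y) ^ 2 + δ ^ 2 := by positivity
  linarith [Real.log_lt_log h2 h1]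

lemma antitoneOn_Gf_diff {η δ : ℝ} (hη : 0 < η) (hηδ : η ≤ δ) {a b : ℝ} (hab : a < b) :
    AntitoneOn (fun y => Gf η a b y - Gf δ a b y) (Iic ((a + b) / 2)) := by
  have hδ : 0 < δ := lt_of_lt_of_le hη hηδ
  apply antitoneOn_of_deriv_nonpos (convex_Iic _)
    (((continuous_Gf hη a b).sub (continuous_Gf hδ a b)).continuousOn)
    (fun y hy => ((hasDerivAt_Gf hη a b y).sub (hasDerivAt_Gf hδ a b y)).differentiableAt.differentiableWithinAt)
  intro y hy
  rw [interior_Iic, mem_Iio] at hy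
  rw [((hasDerivAt_Gf hη a b y).sub (hasDerivAt_Gf hδ a b y)).deriv]
  set A := (a - y) ^ 2 with hA
  set B := (b - y) ^ 2 with hB
  have hAB : A ≤ B := by nlinarith
  have h1 : (0:ℝ) < A + η ^ 2 := by positivity
  have h2 : (0:ℝ) < B + η ^ 2 := by positivity
  have h3 : (0:ℝ) < A + δ ^ 2 := by positivity
  have h4 : (0:ℝ) < B + δ ^ 2 := by positivity
  have key : Real.log (A + η ^ 2) + Real.log (B + δ ^ 2)
      ≤ Real.log (B + η ^ 2) + Real.log (A + δ ^ 2) := by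
    rw [← Real.log_mul (ne_of_gt h1) (ne_of_gt h4), ← Real.log_mul (ne_of_gt h2) (ne_of_gt h3)]
    apply Real.log_le_log (by positivity)
    have h5 : 0 ≤ (B - A) * (δ ^ 2 - η ^ 2) :=
      mul_nonneg (by linarith) (by nlinarith)
    nlinarith [h5]
  linarith

lemma inner_eq {δ : ℝ} (hδ : 0 < δ) (a₂ b₂ κ y : ℝ) :
    (∫ x in a₂..b₂, (Real.log ((x - y) ^ 2 + δ ^ 2) - Real.log ((x - y - κ) ^ 2 + δ ^ 2)))
      = Gf δ a₂ b₂ y - Gf δ a₂ b₂ (y + κ) := by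
  have c1 : Continuous fun x : ℝ => Real.log ((x - y) ^ 2 + δ ^ 2) :=
    Continuous.log (by continuity) (fun x => by positivity)
  have c2 : Continuous fun x : ℝ => Real.log ((x - y - κ) ^ 2 + δ ^ 2) :=
    Continuous.log (by continuity) (fun x => by positivity)
  rw [integral_sub (c1.intervalIntegrable _ _) (c2.intervalIntegrable _ _)]
  have e1 := integral_logsq hδ y a₂ b₂
  have e2 := integral_logsq hδ (y + κ) a₂ b₂
  have h3 : (fun x : ℝ => Real.log ((x - y - κ) ^ 2 + δ ^ 2))
      = fun x : ℝ => Real.log ((x - (y + κ)) ^ 2 + δ ^ 2) := by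
    funext x; ring_nf
  rw [h3]
  rw [e1, e2]
  rfl

lemma double_eq {δ : ℝ} (hδ : 0 < δ) (a₁ b₁ a₂ b₂ κ : ℝ) :
    (∫ y in a₁..b₁, ∫ x in a₂..b₂,
        (Real.log ((x - y) ^ 2 + δ ^ 2) - Real.log ((x - y - κ) ^ 2 + δ ^ 2)))
      = ∫ y in a₁..a₁ + κ, (Gf δ a₂ b₂ y - Gf δ a₂ b₂ (y + (b₁ - a₁))) := by
  have hrw : (fun y => ∫ x in a₂..b₂,
      (Real.log ((x - y) ^ 2 + δ ^ 2) - Real.log ((x - y - κ) ^ 2 + δ ^ 2)))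
      = fun y => Gf δ a₂ b₂ y - Gf δ a₂ b₂ (y + κ) := funext fun y => inner_eq hδ a₂ b₂ κ y
  rw [hrw]
  have cF : Continuous (Gf δ a₂ b₂) := continuous_Gf hδ a₂ b₂
  have iF : ∀ u v : ℝ, IntervalIntegrable (Gf δ a₂ b₂) volume u v :=
    fun u v => cF.intervalIntegrable u v
  have cFκ : Continuous fun y : ℝ => Gf δ a₂ b₂ (y + κ) := cF.comp (by continuity)
  have cFd : Continuous fun y : ℝ => Gf δ a₂ b₂ (y + (b₁ - a₁)) := cF.comp (by continuity)
  rw [integral_sub (cF.intervalIntegrable _ _) (cFκ.intervalIntegrable _ _),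
    integral_sub (cF.intervalIntegrable _ _) (cFd.intervalIntegrable _ _)]
  rw [integral_comp_add_right (Gf δ a₂ b₂) κ, integral_comp_add_right (Gf δ a₂ b₂) (b₁ - a₁)]
  rw [show a₁ + (b₁ - a₁) = b₁ by ring, show a₁ + κ + (b₁ - a₁) = b₁ + κ by ring]
  have e1 := integral_add_adjacent_intervals (iF a₁ b₁) (iF b₁ (b₁ + κ))
  have e2 := integral_add_adjacent_intervals (iF a₁ (a₁ + κ)) (iF (a₁ + κ) (b₁ + κ))
  linarith

lemma double_pos {δ a₁ b₁ a₂ b₂ κ : ℝ} (hδ : 0 < δ) (h₁ : a₁ < b₁) (h₂ : a₂ < b₂)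
    (hκ₀ : 0 < κ) (hκ : κ ≤ (a₂ + b₂) / 2 - (a₁ + b₁) / 2) :
    0 < ∫ y in a₁..b₁, ∫ x in a₂..b₂,
        (Real.log ((x - y) ^ 2 + δ ^ 2) - Real.log ((x - y - κ) ^ 2 + δ ^ 2)) := by
  rw [double_eq hδ a₁ b₁ a₂ b₂ κ]
  have cF : Continuous (Gf δ a₂ b₂) := continuous_Gf hδ a₂ b₂
  have cI : Continuous fun y => Gf δ a₂ b₂ y - Gf δ a₂ b₂ (y + (b₁ - a₁)) :=
    cF.sub (cF.comp (by continuity))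
  refine intervalIntegral_pos_of_pos_on (cI.intervalIntegrable _ _) ?_ (by linarith)
  intro y hy
  rw [sub_pos]
  exact pair_lt (Gf_sym δ a₂ b₂) (strictAntiOn_Gf hδ h₂) (by linarith [hy.1])
    (by rcases hy with ⟨hy1, hy2⟩; linarith)

lemma double_mono {η δ a₁ b₁ a₂ b₂ κ : ℝ} (hη : 0 < η) (hηδ : η ≤ δ)
    (h₁ : a₁ < b₁) (h₂ : a₂ < b₂)
    (hκ₀ : 0 < κ) (hκ : κ ≤ (a₂ + b₂) / 2 - (a₁ + b₁) / 2) :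
    (∫ y in a₁..b₁, ∫ x in a₂..b₂,
        (Real.log ((x - y) ^ 2 + δ ^ 2) - Real.log ((x - y - κ) ^ 2 + δ ^ 2)))
      ≤ ∫ y in a₁..b₁, ∫ x in a₂..b₂,
        (Real.log ((x - y) ^ 2 + η ^ 2) - Real.log ((x - y - κ) ^ 2 + η ^ 2)) := by
  have hδ : 0 < δ := lt_of_lt_of_le hη hηδ
  rw [double_eq hδ a₁ b₁ a₂ b₂ κ, double_eq hη a₁ b₁ a₂ b₂ κ]
  have cFδ : Continuous (Gf δ a₂ b₂) := continuous_Gf hδ a₂ b₂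
  have cFη : Continuous (Gf η a₂ b₂) := continuous_Gf hη a₂ b₂
  apply integral_mono_on (by linarith)
    ((cFδ.sub (cFδ.comp (by continuity))).intervalIntegrable _ _)
    ((cFη.sub (cFη.comp (by continuity))).intervalIntegrable _ _)
  intro y hy
  rcases hy with ⟨hy1, hy2⟩
  have := pair_le (f := fun y => Gf η a₂ b₂ y - Gf δ a₂ b₂ y)
    (fun y => by simp only [Gf_sym]) (antitoneOn_Gf_diff hη hηδ h₂)
    (y₁ := y) (y₂ := y + (b₁ - a₁)) (by linarith) (by linarith)
  simp only [Pi.sub_apply, Function.comp_apply] at this ⊢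
  linarith

lemma ae_ne (y : ℝ) : ∀ᵐ x : ℝ, x ≠ y := by
  have : {x : ℝ | ¬ x ≠ y} = {y} := by ext x; simp [eq_comm]
  rw [MeasureTheory.ae_iff, this]
  exact measure_singleton y

lemma log_mid_bound {t η : ℝ} (ht : t ≠ 0) (hη : 0 < η) (hη1 : η ≤ 1) :
    |Real.log (t ^ 2 + η ^ 2)| ≤ |Real.log (t ^ 2)| + Real.log (t ^ 2 + 1) := by
  have h0 : (0:ℝ) < t ^ 2 := by positivity
  have hlo : Real.log (t ^ 2) ≤ Real.log (t ^ 2 + η ^ 2) := Real.log_le_log h0 (by nlinarith)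
  have hhi : Real.log (t ^ 2 + η ^ 2) ≤ Real.log (t ^ 2 + 1) :=
    Real.log_le_log (by positivity) (by nlinarith)
  have h1 : 0 ≤ Real.log (t ^ 2 + 1) := Real.log_nonneg (by nlinarith)
  rw [abs_le]
  constructor
  · have := neg_abs_le (Real.log (t ^ 2)); linarith
  · have := abs_nonneg (Real.log (t ^ 2)); linarith

lemma intervalIntegrable_abs_log_sq (c a b : ℝ) :
    IntervalIntegrable (fun x => |Real.log ((x - c) ^ 2)|) volume a b := by
  have h1 := ((intervalIntegrable_log_all (a - c) (b - c)).abs).comp_sub_right c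
  rw [sub_add_cancel, sub_add_cancel] at h1
  have h2 := h1.const_mul (2:ℝ)
  have h3 : (fun x : ℝ => (2:ℝ) * |Real.log (x - c)|) = fun x => |Real.log ((x - c) ^ 2)| := by
    funext x
    rw [Real.log_pow]
    push_cast
    rw [abs_mul]
    norm_num
  rwa [h3] at h2

lemma log_tendsto_sq (t : ℝ) (ht : t ≠ 0) :
    Tendsto (fun η : ℝ => Real.log (t ^ 2 + η ^ 2)) (𝓝[>] (0:ℝ)) (𝓝 (Real.log (t ^ 2))) := by
  have h1 : Tendsto (fun η : ℝ => t ^ 2 + η ^ 2) (𝓝 (0:ℝ)) (𝓝 (t ^ 2 + 0 ^ 2)) :=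
    (continuous_const.add (continuous_pow 2)).tendsto 0
  have h2 : Tendsto (fun η : ℝ => t ^ 2 + η ^ 2) (𝓝[>] (0:ℝ)) (𝓝 (t ^ 2)) := by
    simpa using h1.mono_left nhdsWithin_le_nhds
  exact (Real.continuousAt_log (by positivity)).tendsto.comp h2

lemma inner_tendsto (a₂ b₂ κ y : ℝ) :
    Tendsto (fun η : ℝ => ∫ x in a₂..b₂,
        (Real.log ((x - y) ^ 2 + η ^ 2) - Real.log ((x - y - κ) ^ 2 + η ^ 2))) (𝓝[>] (0:ℝ))
      (𝓝 (∫ x in a₂..b₂, (Real.log ((x - y) ^ 2) - Real.log ((x - y - κ) ^ 2)))) := by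
  apply intervalIntegral.tendsto_integral_filter_of_dominated_convergence
    (bound := fun x => (|Real.log ((x - y) ^ 2)| + Real.log ((x - y) ^ 2 + 1))
      + (|Real.log ((x - y - κ) ^ 2)| + Real.log ((x - y - κ) ^ 2 + 1)))
  · filter_upwards [self_mem_nhdsWithin] with η hη
    have hη' : (0:ℝ) < η := hη
    exact (Continuous.sub
      (Continuous.log (by continuity) (fun x => by positivity))
      (Continuous.log (by continuity) (fun x => by positivity))).aestronglyMeasurable.restrict
  · filter_upwards [Ioc_mem_nhdsGT_of_mem (Set.mem_Ico.2 ⟨le_refl (0:ℝ), zero_lt_one⟩)]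
      with η hη
    filter_upwards [ae_ne y, ae_ne (y + κ)] with x hx1 hx2 _
    have ht1 : x - y ≠ 0 := sub_ne_zero.2 hx1
    have ht2 : x - y - κ ≠ 0 := by
      intro h; apply hx2; linarith [sub_eq_zero.1 h]
    have b1 := log_mid_bound ht1 hη.1 hη.2
    have b2 := log_mid_bound ht2 hη.1 hη.2
    rw [Real.norm_eq_abs]
    calc |Real.log ((x - y) ^ 2 + η ^ 2) - Real.log ((x - y - κ) ^ 2 + η ^ 2)|
        ≤ |Real.log ((x - y) ^ 2 + η ^ 2)| + |Real.log ((x - y - κ) ^ 2 + η ^ 2)| :=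
          abs_sub _ _
      _ ≤ _ := by linarith
  · apply IntervalIntegrable.add
    · exact (intervalIntegrable_abs_log_sq y a₂ b₂).add
        ((Continuous.log (by continuity) (fun x => by positivity)).intervalIntegrable _ _)
    · have h := intervalIntegrable_abs_log_sq (y + κ) a₂ b₂
      have hh : (fun x : ℝ => |Real.log ((x - (y + κ)) ^ 2)|)
          = fun x : ℝ => |Real.log ((x - y - κ) ^ 2)| := by
        funext x; ring_nf
      rw [hh] at h
      exact h.add ((Continuous.log (by continuity) (fun x => by positivity)).intervalIntegrable _ _)
  · filter_upwards [ae_ne y, ae_ne (y + κ)] with x hx1 hx2 _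
    have ht1 : x - y ≠ 0 := sub_ne_zero.2 hx1
    have ht2 : x - y - κ ≠ 0 := by
      intro h; apply hx2; linarith [sub_eq_zero.1 h]
    exact (log_tendsto_sq _ ht1).sub (log_tendsto_sq _ ht2)

noncomputable def PB (t : ℝ) : ℝ :=
  2 * |t * Real.log t| + |t| * Real.log (t ^ 2 + 1) + 2 * |t| + Real.pi

lemma continuous_PB : Continuous PB := by
  unfold PB
  have h1 : Continuous fun t : ℝ => Real.log (t ^ 2 + 1) :=
    Continuous.log (by continuity) (fun t => by positivity)
  exact (((continuous_const.mul Real.continuous_mul_log.abs).add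
    (continuous_abs.mul h1)).add (continuous_const.mul continuous_abs)).add continuous_const

lemma abs_arctan_le (x : ℝ) : |Real.arctan x| ≤ Real.pi / 2 :=
  abs_le.2 ⟨(Real.neg_pi_div_two_lt_arctan x).le, (Real.arctan_lt_pi_div_two x).le⟩

lemma Phi_bound {η : ℝ} (hη : 0 < η) (hη1 : η ≤ 1) (t : ℝ) : |Phi η t| ≤ PB t := by
  have hpi : (0:ℝ) < Real.pi := Real.pi_pos
  rcases eq_or_ne t 0 with rfl | ht
  · have : Phi η 0 = 0 := by simp [Phi]
    rw [this]
    unfold PB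
    simp
    positivity
  · have hterm3 : |2 * η * Real.arctan (t / η)| ≤ Real.pi := by
      rw [abs_mul]
      have h1 := abs_arctan_le (t / η)
      have h2 : |2 * η| = 2 * η := abs_of_pos (by linarith)
      rw [h2]
      nlinarith [abs_nonneg (Real.arctan (t / η))]
    have hterm1 : |t * Real.log (t ^ 2 + η ^ 2)|
        ≤ 2 * |t * Real.log t| + |t| * Real.log (t ^ 2 + 1) := by
      rw [abs_mul]
      have hmid := log_mid_bound ht hη hη1
      have hlogsq : |Real.log (t ^ 2)| = 2 * |Real.log t| := by
        rw [Real.log_pow]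
        push_cast
        rw [abs_mul]
        norm_num
      have h2 : |t| * |Real.log (t ^ 2 + η ^ 2)|
          ≤ |t| * (|Real.log (t ^ 2)| + Real.log (t ^ 2 + 1)) :=
        mul_le_mul_of_nonneg_left hmid (abs_nonneg t)
      rw [hlogsq] at h2
      rw [← abs_mul]
      have : |t| * (2 * |Real.log t| + Real.log (t ^ 2 + 1))
          = 2 * (|t| * |Real.log t|) + |t| * Real.log (t ^ 2 + 1) := by ring
      rw [this] at h2
      rw [← abs_mul] at h2
      calc |t * Real.log (t ^ 2 + η ^ 2)| = |t| * |Real.log (t ^ 2 + η ^ 2)| := abs_mul _ _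
        _ ≤ _ := by rw [abs_mul] at h2 ⊢; linarith
    unfold Phi PB
    have habs : |t * Real.log (t ^ 2 + η ^ 2) - 2 * t + 2 * η * Real.arctan (t / η)|
        ≤ |t * Real.log (t ^ 2 + η ^ 2)| + |2 * t| + |2 * η * Real.arctan (t / η)| := by
      calc |t * Real.log (t ^ 2 + η ^ 2) - 2 * t + 2 * η * Real.arctan (t / η)|
          ≤ |t * Real.log (t ^ 2 + η ^ 2) - 2 * t| + |2 * η * Real.arctan (t / η)| :=
            abs_add_le _ _
        _ ≤ _ := by linarith [abs_sub (t * Real.log (t ^ 2 + η ^ 2)) (2 * t)]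
    have h2t : |2 * t| = 2 * |t| := by rw [abs_mul]; norm_num
    linarith

lemma double_tendsto (a₁ b₁ a₂ b₂ κ : ℝ) :
    Tendsto (fun η : ℝ => ∫ y in a₁..b₁, ∫ x in a₂..b₂,
        (Real.log ((x - y) ^ 2 + η ^ 2) - Real.log ((x - y - κ) ^ 2 + η ^ 2))) (𝓝[>] (0:ℝ))
      (𝓝 (∫ y in a₁..b₁, ∫ x in a₂..b₂,
        (Real.log ((x - y) ^ 2) - Real.log ((x - y - κ) ^ 2)))) := by
  apply intervalIntegral.tendsto_integral_filter_of_dominated_convergence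
    (bound := fun y => (PB (b₂ - y) + PB (a₂ - y)) + (PB (b₂ - (y + κ)) + PB (a₂ - (y + κ))))
  · filter_upwards [self_mem_nhdsWithin] with η hη
    have hη' : (0:ℝ) < η := hη
    have hrw : (fun y => ∫ x in a₂..b₂,
        (Real.log ((x - y) ^ 2 + η ^ 2) - Real.log ((x - y - κ) ^ 2 + η ^ 2)))
        = fun y => Gf η a₂ b₂ y - Gf η a₂ b₂ (y + κ) := funext (inner_eq hη' a₂ b₂ κ)
    rw [hrw]
    exact ((continuous_Gf hη' _ _).sub
      ((continuous_Gf hη' _ _).comp (by continuity))).aestronglyMeasurable.restrict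
  · filter_upwards [Ioc_mem_nhdsGT_of_mem (Set.mem_Ico.2 ⟨le_refl (0:ℝ), zero_lt_one⟩)]
      with η hη
    refine Eventually.of_forall (fun y _ => ?_)
    rw [inner_eq hη.1 a₂ b₂ κ y, Real.norm_eq_abs]
    have p1 := Phi_bound hη.1 hη.2 (b₂ - y)
    have p2 := Phi_bound hη.1 hη.2 (a₂ - y)
    have p3 := Phi_bound hη.1 hη.2 (b₂ - (y + κ))
    have p4 := Phi_bound hη.1 hη.2 (a₂ - (y + κ))
    have e1 : Gf η a₂ b₂ y = Phi η (b₂ - y) - Phi η (a₂ - y) := rfl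
    have e2 : Gf η a₂ b₂ (y + κ) = Phi η (b₂ - (y + κ)) - Phi η (a₂ - (y + κ)) := rfl
    rw [e1, e2]
    have h1 := abs_sub (Phi η (b₂ - y) - Phi η (a₂ - y))
      (Phi η (b₂ - (y + κ)) - Phi η (a₂ - (y + κ)))
    have h2 := abs_sub (Phi η (b₂ - y)) (Phi η (a₂ - y))
    have h3 := abs_sub (Phi η (b₂ - (y + κ))) (Phi η (a₂ - (y + κ)))
    linarith
  · exact ((((continuous_PB.comp (by continuity)).add
      (continuous_PB.comp (by continuity))).add
      ((continuous_PB.comp (by continuity)).add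
      (continuous_PB.comp (by continuity)))).intervalIntegrable _ _)
  · exact Eventually.of_forall fun y _ => inner_tendsto a₂ b₂ κ y

end LogShiftAux

open LogShiftAux

/-- Let `δ ≥ 0`, `a₁ < b₁`, `a₂ < b₂` with centers `cᵢ = (aᵢ+bᵢ)/2` satisfying `c₂ > c₁`.
For every `0 < κ ≤ c₂ - c₁`, the double integral
`∫_{a₁}^{b₁} ∫_{a₂}^{b₂} (log(|x-y|² + δ²) − log(|x-y-κ|² + δ²)) dx dy`
is strictly positive, and it is at least as large at `δ = 0` as at any `δ ≥ 0`. -/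
theorem double_integral_log_shift_pos (δ a₁ b₁ a₂ b₂ κ : ℝ) (hδ : 0 ≤ δ)
    (h₁ : a₁ < b₁) (h₂ : a₂ < b₂) (hc : (a₁ + b₁) / 2 < (a₂ + b₂) / 2)
    (hκ₀ : 0 < κ) (hκ : κ ≤ (a₂ + b₂) / 2 - (a₁ + b₁) / 2) :
    (0 < ∫ y in a₁..b₁, ∫ x in a₂..b₂,
        (Real.log (|x - y| ^ 2 + δ ^ 2) - Real.log (|x - y - κ| ^ 2 + δ ^ 2))) ∧
      (∫ y in a₁..b₁, ∫ x in a₂..b₂,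
          (Real.log (|x - y| ^ 2 + δ ^ 2) - Real.log (|x - y - κ| ^ 2 + δ ^ 2))) ≤
        ∫ y in a₁..b₁, ∫ x in a₂..b₂,
          (Real.log (|x - y| ^ 2 + (0 : ℝ) ^ 2) - Real.log (|x - y - κ| ^ 2 + (0 : ℝ) ^ 2)) := by
  have hRHS : (∫ y in a₁..b₁, ∫ x in a₂..b₂,
      (Real.log (|x - y| ^ 2 + (0 : ℝ) ^ 2) - Real.log (|x - y - κ| ^ 2 + (0 : ℝ) ^ 2)))
      = ∫ y in a₁..b₁, ∫ x in a₂..b₂,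
      (Real.log ((x - y) ^ 2) - Real.log ((x - y - κ) ^ 2)) := by
    norm_num [sq_abs]
  rcases hδ.eq_or_lt with h0 | hpos
  · subst h0
    constructor
    · rw [hRHS]
      refine lt_of_lt_of_le (double_pos one_pos h₁ h₂ hκ₀ hκ) ?_
      refine ge_of_tendsto (double_tendsto a₁ b₁ a₂ b₂ κ) ?_
      filter_upwards [Ioc_mem_nhdsGT_of_mem (Set.mem_Ico.2 ⟨le_refl (0:ℝ), zero_lt_one⟩)]
        with η hη
      exact double_mono hη.1 hη.2 h₁ h₂ hκ₀ hκ
    · exact le_rfl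
  · constructor
    · have := double_pos hpos h₁ h₂ hκ₀ hκ
      simpa [sq_abs] using this
    · rw [hRHS]
      have hgoal : (∫ y in a₁..b₁, ∫ x in a₂..b₂,
          (Real.log (|x - y| ^ 2 + δ ^ 2) - Real.log (|x - y - κ| ^ 2 + δ ^ 2)))
          = ∫ y in a₁..b₁, ∫ x in a₂..b₂,
          (Real.log ((x - y) ^ 2 + δ ^ 2) - Real.log ((x - y - κ) ^ 2 + δ ^ 2)) := by
        simp [sq_abs]
      rw [hgoal]
      refine ge_of_tendsto (double_tendsto a₁ b₁ a₂ b₂ κ) ?_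
      filter_upwards [Ioc_mem_nhdsGT_of_mem (Set.mem_Ico.2 ⟨le_refl (0:ℝ), hpos⟩)]
        with η hη
      exact double_mono hη.1 hη.2 h₁ h₂ hκ₀ hκ
end

section
/- Let k be a number field of degree N over ℚ with r₁ real and r₂ complex embeddings, V = ℝ^{r₁} × ℂ^{r₂} with the field norm ‖v‖ = ∏_{i=1}^{r₁}|v_i| · ∏_{i=r₁+1}^{r₁+r₂}|v_i|², and embed the ring of integers O_k ⊂ V via the Archimedean embeddings. Then any cylinder C = ∏_{i=1}^{r₁} B_ℝ(t_i, R_i) × ∏_{i=r₁+1}^{d} B_ℂ(t_i, R_i) whose Lebesgue volume is strictly less than π^{r₂}/4^{r₂} contains at most one point of O_k. -/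
open NumberField NumberField.InfinitePlace NumberField.mixedEmbedding MeasureTheory
open scoped Classical

/-- Any cylinder (coordinate-wise product of closed real intervals and closed complex discs)
in the mixed space `ℝ^{r₁} × ℂ^{r₂}` of a number field `K` whose Lebesgue volume is strictly
less than `π^{r₂} / 4^{r₂}` contains at most one point of the ring of integers `𝓞 K`
(embedded via the Archimedean embeddings). -/
theorem cylinder_small_volume_subsingleton (K : Type*) [Field K] [NumberField K]
    (t : mixedSpace K) (R : InfinitePlace K → ℝ)
    (C : Set (mixedSpace K))
    (hC : C = {v : mixedSpace K |
      (∀ w : {w : InfinitePlace K // IsReal w}, |v.1 w - t.1 w| ≤ R w) ∧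
      (∀ w : {w : InfinitePlace K // IsComplex w}, ‖v.2 w - t.2 w‖ ≤ R w)})
    (hvol : volume C < ENNReal.ofReal
      (Real.pi ^ (nrComplexPlaces K) / 4 ^ (nrComplexPlaces K))) :
    ∀ x y : 𝓞 K, mixedEmbedding K (x : K) ∈ C → mixedEmbedding K (y : K) ∈ C → x = y := by
  intro x y hx hy
  by_contra hxy
  subst hC
  obtain ⟨hx1, hx2⟩ := hx
  obtain ⟨hy1, hy2⟩ := hy
  -- nonnegativity of R
  have hR : ∀ w : InfinitePlace K, 0 ≤ R w := by
    intro w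
    by_cases hw : IsReal w
    · exact (abs_nonneg _).trans (hx1 ⟨w, hw⟩)
    · exact (norm_nonneg _).trans (hx2 ⟨w, not_isReal_iff_isComplex.mp hw⟩)
  -- the difference z
  set z : 𝓞 K := x - y with hzdef
  have hz0 : (z : K) ≠ 0 := by
    simp only [hzdef, map_sub, sub_ne_zero, ne_eq]
    exact fun h => hxy (RingOfIntegers.coe_injective h)
  -- bound on normAtPlace of mixedEmbedding z
  have hbound : ∀ w : InfinitePlace K,
      normAtPlace w (mixedEmbedding K (z : K)) ≤ 2 * R w := by
    intro w
    have hzz : mixedEmbedding K (z : K)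
        = mixedEmbedding K (x : K) - mixedEmbedding K (y : K) := by
      simp [hzdef]
    by_cases hw : IsReal w
    · rw [normAtPlace_apply_of_isReal hw, hzz]
      have : (mixedEmbedding K (x : K) - mixedEmbedding K (y : K)).1 ⟨w, hw⟩
          = ((mixedEmbedding K (x : K)).1 ⟨w, hw⟩ - t.1 ⟨w, hw⟩)
            - ((mixedEmbedding K (y : K)).1 ⟨w, hw⟩ - t.1 ⟨w, hw⟩) := by
        simp [Prod.sub_def]
      rw [this, Real.norm_eq_abs]
      calc _ ≤ |(mixedEmbedding K (x : K)).1 ⟨w, hw⟩ - t.1 ⟨w, hw⟩|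
            + |(mixedEmbedding K (y : K)).1 ⟨w, hw⟩ - t.1 ⟨w, hw⟩| := abs_sub _ _
        _ ≤ R w + R w := add_le_add (hx1 ⟨w, hw⟩) (hy1 ⟨w, hw⟩)
        _ = 2 * R w := by ring
    · have hw' : IsComplex w := not_isReal_iff_isComplex.mp hw
      rw [normAtPlace_apply_of_isComplex hw', hzz]
      have : (mixedEmbedding K (x : K) - mixedEmbedding K (y : K)).2 ⟨w, hw'⟩
          = ((mixedEmbedding K (x : K)).2 ⟨w, hw'⟩ - t.2 ⟨w, hw'⟩)
            - ((mixedEmbedding K (y : K)).2 ⟨w, hw'⟩ - t.2 ⟨w, hw'⟩) := by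
        simp [Prod.sub_def]
      rw [this]
      calc _ ≤ ‖(mixedEmbedding K (x : K)).2 ⟨w, hw'⟩ - t.2 ⟨w, hw'⟩‖
            + ‖(mixedEmbedding K (y : K)).2 ⟨w, hw'⟩ - t.2 ⟨w, hw'⟩‖ :=
            norm_sub_le _ _
        _ ≤ R w + R w := add_le_add (hx2 ⟨w, hw'⟩) (hy2 ⟨w, hw'⟩)
        _ = 2 * R w := by ring
  -- 1 ≤ norm of mixedEmbedding z
  have hnorm1 : (1 : ℝ) ≤ mixedEmbedding.norm (mixedEmbedding K (z : K)) := by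
    rw [mixedEmbedding.norm_eq_norm]
    rw [← Algebra.coe_norm_int z]
    have hz0' : Algebra.norm ℤ z ≠ 0 := by
      intro h
      apply hz0
      have := Algebra.coe_norm_int (K := K) z
      rw [h] at this
      have h2 : Algebra.norm ℚ (z : K) = 0 := by
        rw [← this]; norm_num
      rwa [Algebra.norm_eq_zero_iff] at h2
    have : (1 : ℤ) ≤ |Algebra.norm ℤ z| := Int.one_le_abs hz0'
    exact_mod_cast this
  -- norm ≤ product of (2R)^mult
  have hnorm2 : mixedEmbedding.norm (mixedEmbedding K (z : K))
      ≤ ∏ w : InfinitePlace K, (2 * R w) ^ mult w := by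
    rw [mixedEmbedding.norm_apply]
    apply Finset.prod_le_prod
    · intro w _; exact pow_nonneg (normAtPlace_nonneg _ _) _
    · intro w _; exact pow_le_pow_left₀ (normAtPlace_nonneg _ _) (hbound w) _
  -- split the product over real and complex places
  have hsplit : ∏ w : InfinitePlace K, (2 * R w) ^ mult w
      = (∏ w : {w : InfinitePlace K // IsReal w}, (2 * R w)) *
        (∏ w : {w : InfinitePlace K // IsComplex w}, (2 * R w) ^ 2) := by
    rw [← Fintype.prod_subtype_mul_prod_subtype (IsReal (K := K))
      (fun w => (2 * R w) ^ mult w)]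
    congr 1
    · exact Finset.prod_congr rfl fun w _ => by rw [mult, if_pos w.2, pow_one]
    · exact Fintype.prod_equiv
        (Equiv.subtypeEquivRight fun w : InfinitePlace K => not_isReal_iff_isComplex)
        (fun w => (2 * R (w : InfinitePlace K)) ^ mult (w : InfinitePlace K))
        (fun w => (2 * R (w : InfinitePlace K)) ^ 2)
        (fun w => by simp only [mult, if_neg w.2]; rfl)
  have hkey : (1 : ℝ) ≤ (∏ w : {w : InfinitePlace K // IsReal w}, (2 * R w)) *
      (∏ w : {w : InfinitePlace K // IsComplex w}, (2 * R w) ^ 2) := by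
    calc (1 : ℝ) ≤ _ := hnorm1
      _ ≤ _ := hnorm2
      _ = _ := hsplit
  -- compute the volume of C as a set product of pi sets
  have hCeq : {v : mixedSpace K |
      (∀ w : {w : InfinitePlace K // IsReal w}, |v.1 w - t.1 w| ≤ R w) ∧
      (∀ w : {w : InfinitePlace K // IsComplex w}, ‖v.2 w - t.2 w‖ ≤ R w)}
      = (Set.univ.pi fun w : {w : InfinitePlace K // IsReal w} =>
          Metric.closedBall (t.1 w) (R w)) ×ˢ
        (Set.univ.pi fun w : {w : InfinitePlace K // IsComplex w} =>
          Metric.closedBall (t.2 w) (R w)) := by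
    ext v
    simp only [Set.mem_setOf_eq, Set.mem_prod, Set.mem_pi, Set.mem_univ, true_implies,
      Metric.mem_closedBall, Real.dist_eq, Complex.dist_eq]
  have hvolC : volume {v : mixedSpace K |
      (∀ w : {w : InfinitePlace K // IsReal w}, |v.1 w - t.1 w| ≤ R w) ∧
      (∀ w : {w : InfinitePlace K // IsComplex w}, ‖v.2 w - t.2 w‖ ≤ R w)}
      = (∏ w : {w : InfinitePlace K // IsReal w}, ENNReal.ofReal (2 * R w)) *
        (∏ w : {w : InfinitePlace K // IsComplex w},
          ENNReal.ofReal (R w) ^ 2 * NNReal.pi) := by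
    rw [hCeq]
    rw [Measure.volume_eq_prod, Measure.prod_prod, volume_pi_pi, volume_pi_pi]
    simp [Real.volume_closedBall, Complex.volume_closedBall]
  -- rewrite the volume as ofReal of a real product
  have hpi : ((NNReal.pi : NNReal) : ENNReal) = ENNReal.ofReal Real.pi := by
    rw [← ENNReal.ofReal_coe_nnreal, NNReal.coe_real_pi]
  have hvolC' : volume {v : mixedSpace K |
      (∀ w : {w : InfinitePlace K // IsReal w}, |v.1 w - t.1 w| ≤ R w) ∧
      (∀ w : {w : InfinitePlace K // IsComplex w}, ‖v.2 w - t.2 w‖ ≤ R w)}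
      = ENNReal.ofReal
        ((∏ w : {w : InfinitePlace K // IsReal w}, (2 * R w)) *
         (∏ w : {w : InfinitePlace K // IsComplex w}, (R w ^ 2 * Real.pi))) := by
    have h1 : (0:ℝ) ≤ ∏ w : {w : InfinitePlace K // IsReal w}, (2 * R w) :=
      Finset.prod_nonneg fun w _ => by linarith [hR w.1]
    rw [hvolC, ENNReal.ofReal_mul h1,
      ENNReal.ofReal_prod_of_nonneg (fun w _ => by linarith [hR w.1]),
      ENNReal.ofReal_prod_of_nonneg (fun w _ => mul_nonneg (sq_nonneg _) Real.pi_pos.le)]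
    congr 1
    refine Finset.prod_congr rfl fun w _ => ?_
    rw [ENNReal.ofReal_mul (sq_nonneg _), ← ENNReal.ofReal_pow (hR w), hpi]
  -- the real inequality: π^r₂ / 4^r₂ ≤ volume
  have hreal : Real.pi ^ nrComplexPlaces K / 4 ^ nrComplexPlaces K
      ≤ (∏ w : {w : InfinitePlace K // IsReal w}, (2 * R w)) *
        (∏ w : {w : InfinitePlace K // IsComplex w}, (R w ^ 2 * Real.pi)) := by
    have h4 : (∏ w : {w : InfinitePlace K // IsComplex w}, (2 * R w) ^ 2)
        = 4 ^ nrComplexPlaces K * ∏ w : {w : InfinitePlace K // IsComplex w}, R w ^ 2 := by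
      calc (∏ w : {w : InfinitePlace K // IsComplex w}, (2 * R w) ^ 2)
          = ∏ w : {w : InfinitePlace K // IsComplex w}, (4 * R w ^ 2) :=
            Finset.prod_congr rfl fun w _ => by ring
        _ = _ := by
            rw [Finset.prod_mul_distrib, Finset.prod_const, Finset.card_univ]
    have hpi2 : (∏ w : {w : InfinitePlace K // IsComplex w}, (R w ^ 2 * Real.pi))
        = (∏ w : {w : InfinitePlace K // IsComplex w}, R w ^ 2) * Real.pi ^ nrComplexPlaces K := by
      rw [Finset.prod_mul_distrib, Finset.prod_const, Finset.card_univ]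
    rw [hpi2, div_le_iff₀ (by positivity)]
    have hkey' := hkey
    rw [h4] at hkey'
    set P := ∏ w : {w : InfinitePlace K // IsReal w}, (2 * R w)
    set Q := ∏ w : {w : InfinitePlace K // IsComplex w}, R w ^ 2
    have hpiP : (0:ℝ) ≤ Real.pi ^ nrComplexPlaces K := by positivity
    nlinarith [hkey', Real.pi_pos]
  -- conclude
  rw [hvolC'] at hvol
  exact absurd (ENNReal.ofReal_le_ofReal hreal) (not_le.mpr hvol)
end

section
/- Let F ⊂ V^× = {v ∈ V : ‖v‖ ≠ 0} be a finite union of convex closed cones such that F/ℝ^× is compact in the projective space P(V). Then there exists a constant C₀ > 0 such that every v ∈ F satisfies C₀^{-1}‖v‖^{1/N} ≤ |v|_i ≤ C₀‖v‖^{1/N} for every coordinate i = 1,…,d. -/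
open NumberField NumberField.InfinitePlace NumberField.mixedEmbedding
open scoped Classical

private lemma continuous_normAtPlace' {K : Type*} [Field K] [NumberField K]
    (w : InfinitePlace K) : Continuous (fun v : mixedSpace K ↦ normAtPlace w v) := by
  obtain hw | hw := isReal_or_isComplex w
  · simp only [normAtPlace_apply_of_isReal hw]
    fun_prop
  · simp only [normAtPlace_apply_of_isComplex hw]
    fun_prop

private lemma continuous_mixedNorm' {K : Type*} [Field K] [NumberField K] :
    Continuous (fun v : mixedSpace K ↦ mixedEmbedding.norm v) := by
  simp only [mixedEmbedding.norm_apply]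
  exact continuous_finset_prod _ fun w _ ↦ (continuous_normAtPlace' w).pow _

/-- Let `F` be a finite union of convex closed cones in `V^× = {v : ‖v‖ ≠ 0}` of the mixed space
`V = ℝ^{r₁} × ℂ^{r₂}` of a number field `K` of degree `N`, whose image in the projective space
`P(V)` is compact (equivalently, `F ∩ S(0,1)` is a compact subset of `V^×`).  Then there is a
constant `C₀ > 0` such that every `v ∈ F` satisfies
`C₀⁻¹ ‖v‖^{1/N} ≤ |v|ᵢ ≤ C₀ ‖v‖^{1/N}` for every coordinate `i`, i.e. for every infinite
place `w`, `normAtPlace w v` is within a factor `C₀` of `(mixedEmbedding.norm v)^{1/N}`. -/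
theorem cone_coords_comparable_to_norm (K : Type*) [Field K] [NumberField K]
    (n : ℕ) (F : Fin n → Set (mixedSpace K)) (S : Set (mixedSpace K))
    (hS : S = ⋃ j, F j)
    (hconv : ∀ j, Convex ℝ (F j))
    (hcone : ∀ j, ∀ v ∈ F j, ∀ c : ℝ, 0 < c → c • v ∈ F j)
    (hsub : ∀ v ∈ S, mixedEmbedding.norm v ≠ 0)
    (hclosed : ∀ j, IsClosed
      {v : {v : mixedSpace K // mixedEmbedding.norm v ≠ 0} | (v : mixedSpace K) ∈ F j})
    (hcpt : IsCompact (S ∩ Metric.sphere (0 : mixedSpace K) 1)) :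
    ∃ C₀ : ℝ, 0 < C₀ ∧ ∀ v ∈ S, ∀ w : InfinitePlace K,
      C₀⁻¹ * (mixedEmbedding.norm v) ^ ((1 : ℝ) / (Module.finrank ℚ K)) ≤ normAtPlace w v ∧
      normAtPlace w v ≤ C₀ * (mixedEmbedding.norm v) ^ ((1 : ℝ) / (Module.finrank ℚ K)) := by
  set N : ℕ := Module.finrank ℚ K with hN
  have hN0 : 0 < N := Module.finrank_pos
  set T : Set (mixedSpace K) := S ∩ Metric.sphere (0 : mixedSpace K) 1 with hT
  -- every v ∈ S is nonzero and its normalization lies in T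
  have hvne : ∀ v ∈ S, v ≠ 0 := by
    intro v hv h0
    exact hsub v hv (by rw [h0, map_zero])
  have hscale : ∀ v ∈ S, ∀ c : ℝ, 0 < c → c • v ∈ S := by
    intro v hv c hc
    rw [hS] at hv ⊢
    obtain ⟨t, ⟨j, rfl⟩, hvj⟩ := hv
    exact Set.mem_iUnion.2 ⟨j, hcone j v hvj c hc⟩
  by_cases hTne : T.Nonempty
  · -- minimum of the mixed norm on the compact T
    obtain ⟨u₀, hu₀T, hmin⟩ := hcpt.exists_isMinOn hTne
      (continuous_mixedNorm'.continuousOn)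
    set c : ℝ := mixedEmbedding.norm u₀ with hc
    have hc0 : 0 < c := lt_of_le_of_ne (mixedEmbedding.norm_nonneg u₀)
      (Ne.symm (hsub u₀ hu₀T.1))
    -- bounds on T
    have hT_bounds : ∀ u ∈ T, ∀ w : InfinitePlace K,
        c ≤ normAtPlace w u ∧ normAtPlace w u ≤ 1 ∧
        c ≤ mixedEmbedding.norm u ∧ mixedEmbedding.norm u ≤ 1 := by
      intro u hu w
      have hnorm1 : ‖u‖ = 1 := by
        simpa using mem_sphere_zero_iff_norm.mp hu.2
      have hle1 : ∀ w' : InfinitePlace K, normAtPlace w' u ≤ 1 := by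
        intro w'
        rw [← hnorm1, norm_eq_sup'_normAtPlace]
        exact Finset.le_sup' (f := fun w ↦ normAtPlace w u) (Finset.mem_univ w')
      have hcle : c ≤ mixedEmbedding.norm u := hmin hu
      have hnle1 : mixedEmbedding.norm u ≤ 1 := by
        rw [mixedEmbedding.norm_apply]
        exact Finset.prod_le_one
          (fun w' _ ↦ pow_nonneg (normAtPlace_nonneg w' u) _)
          (fun w' _ ↦ pow_le_one₀ (normAtPlace_nonneg w' u) (hle1 w'))
      refine ⟨?_, hle1 w, hcle, hnle1⟩
      -- c ≤ normAtPlace w u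
      have h1 : mixedEmbedding.norm u ≤ (normAtPlace w u) ^ (mult w) := by
        rw [mixedEmbedding.norm_apply, ← Finset.prod_erase_mul _ _ (Finset.mem_univ w)]
        calc (∏ w' ∈ Finset.univ.erase w, normAtPlace w' u ^ mult w') *
              normAtPlace w u ^ mult w
            ≤ 1 * normAtPlace w u ^ mult w := by
              gcongr
              · exact pow_nonneg (normAtPlace_nonneg w u) _
              · exact Finset.prod_le_one
                  (fun w' _ ↦ pow_nonneg (normAtPlace_nonneg w' u) _)
                  (fun w' _ ↦ pow_le_one₀ (normAtPlace_nonneg w' u) (hle1 w'))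
          _ = normAtPlace w u ^ mult w := one_mul _
      have h2 : (normAtPlace w u) ^ (mult w) ≤ normAtPlace w u :=
        pow_le_of_le_one (normAtPlace_nonneg w u) (hle1 w) mult_ne_zero
      exact le_trans hcle (le_trans h1 h2)
    have hc1 : c ≤ 1 := by
      obtain ⟨u, hu⟩ := hTne
      obtain ⟨h1, h2, -, -⟩ := hT_bounds u hu (Classical.arbitrary _)
      exact le_trans h1 h2
    refine ⟨c⁻¹, inv_pos.mpr hc0, ?_⟩
    intro v hv w
    -- normalize
    set t : ℝ := ‖v‖ with ht
    have ht0 : 0 < t := norm_pos_iff.mpr (hvne v hv)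
    set u : mixedSpace K := t⁻¹ • v with hu
    have huS : u ∈ S := hscale v hv t⁻¹ (inv_pos.mpr ht0)
    have huT : u ∈ T := by
      refine ⟨huS, ?_⟩
      rw [mem_sphere_zero_iff_norm, hu, _root_.norm_smul, Real.norm_eq_abs,
        abs_of_pos (inv_pos.mpr ht0), inv_mul_cancel₀ (ne_of_gt ht0)]
    have hvu : v = t • u := by
      rw [hu, smul_smul, mul_inv_cancel₀ (ne_of_gt ht0), one_smul]
    obtain ⟨hb1, hb2, hb3, hb4⟩ := hT_bounds u huT w
    -- norm of v in terms of u
    have hnv : mixedEmbedding.norm v = t ^ N * mixedEmbedding.norm u := by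
      rw [hvu, mixedEmbedding.norm_smul, abs_of_pos ht0]
    have hnap : normAtPlace w v = t * normAtPlace w u := by
      rw [hvu, normAtPlace_smul, abs_of_pos ht0]
    have hrpow : (mixedEmbedding.norm v) ^ ((1 : ℝ) / N)
        = t * (mixedEmbedding.norm u) ^ ((1 : ℝ) / N) := by
      rw [hnv, Real.mul_rpow (by positivity) (mixedEmbedding.norm_nonneg u),
        ← Real.rpow_natCast t N, ← Real.rpow_mul (le_of_lt ht0),
        mul_one_div, div_self (by exact_mod_cast hN0.ne'), Real.rpow_one]
    -- bounds for norm u ^ (1/N)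
    have hnu_nonneg : (0:ℝ) ≤ mixedEmbedding.norm u := mixedEmbedding.norm_nonneg u
    have hru_le : (mixedEmbedding.norm u) ^ ((1 : ℝ) / N) ≤ 1 :=
      Real.rpow_le_one hnu_nonneg hb4 (by positivity)
    have hru_ge : c ≤ (mixedEmbedding.norm u) ^ ((1 : ℝ) / N) := by
      have h1 : c ^ ((1 : ℝ) / N) ≤ (mixedEmbedding.norm u) ^ ((1 : ℝ) / N) :=
        Real.rpow_le_rpow (le_of_lt hc0) hb3 (by positivity)
      have h3 : c ≤ c ^ ((1 : ℝ) / N) := by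
        nth_rewrite 1 [← Real.rpow_one c]
        apply Real.rpow_le_rpow_of_exponent_ge hc0 hc1
        rw [div_le_one (by exact_mod_cast hN0)]
        exact_mod_cast hN0
      exact le_trans h3 h1
    constructor
    · rw [inv_inv, hrpow, hnap, ← mul_assoc, mul_comm c t, mul_assoc]
      gcongr
      calc c * (mixedEmbedding.norm u) ^ ((1 : ℝ) / N) ≤ c * 1 := by
            gcongr
        _ = c := mul_one c
        _ ≤ normAtPlace w u := hb1
    · rw [hrpow, hnap, ← mul_assoc, mul_comm c⁻¹ t, mul_assoc]
      gcongr
      calc normAtPlace w u ≤ 1 := hb2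
        _ = c⁻¹ * c := (inv_mul_cancel₀ (ne_of_gt hc0)).symm
        _ ≤ c⁻¹ * (mixedEmbedding.norm u) ^ ((1 : ℝ) / N) := by gcongr
  · refine ⟨1, one_pos, ?_⟩
    intro v hv w
    exfalso
    apply hTne
    have ht0 : (0:ℝ) < ‖v‖ := norm_pos_iff.mpr (hvne v hv)
    refine ⟨‖v‖⁻¹ • v, hscale v hv _ (inv_pos.mpr ht0), ?_⟩
    rw [mem_sphere_zero_iff_norm, _root_.norm_smul, Real.norm_eq_abs,
      abs_of_pos (inv_pos.mpr ht0), inv_mul_cancel₀ (ne_of_gt ht0)]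
end
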